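/- Every finite group G all of whose Sylow subgroups are cyclic is isomorphic to G_{a,b,r} for some positive integers a, b and integer r with 0 ≤ r < b (taking r = 0 when b = 1), a·b = |G|, b odd, r^a ≡ 1 (mod b), and gcd(a(r−1), b) = 1. -/

import Mathlib

/-- The residue class of `r` as a unit of `ZMod b`, where invertibility follows from
`r ^ a ≡ 1 (mod b)` with `a ≠ 0`. -/
noncomputable def GabrUnit (a b : ℕ) (r : ℤ) (ha : a ≠ 0)
    (hr : r ^ a ≡ 1 [ZMOD (b : ℤ)]) : (ZMod b)ˣ :=
  (IsUnit.of_pow_eq_one (a := ((r : ZMod b))) (n := a)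
    (by
      have h : ((r ^ a : ℤ) : ZMod b) = ((1 : ℤ) : ZMod b) :=
        (ZMod.intCast_eq_intCast_iff _ _ _).mpr hr
      push_cast at h
      exact h) ha).unit

/-- Additive automorphisms of `α`, viewed as multiplicative automorphisms of
`Multiplicative α`. -/
def addAutToMulAut {α : Type*} [AddZeroClass α] :
    Multiplicative (AddAut α) →* MulAut (Multiplicative α) :=
  MonoidHom.mk' (fun f => AddEquiv.toMultiplicative f.toAdd) (fun f g => by ext x; rfl)

/-- The action homomorphism `ℤ/aℤ → Aut(ℤ/bℤ)` sending the generator `1` of `ℤ/aℤ` to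
multiplication by `r` on `ℤ/bℤ` (written multiplicatively). -/
noncomputable def GabrAct (a b : ℕ) (r : ℤ) (ha : a ≠ 0)
    (hr : r ^ a ≡ 1 [ZMOD (b : ℤ)]) :
    Multiplicative (ZMod a) →* MulAut (Multiplicative (ZMod b)) :=
  AddMonoidHom.toMultiplicativeLeft
    (ZMod.lift a ⟨zmultiplesHom _ (Additive.ofMul
        (addAutToMulAut (AddAut.mulLeft (GabrUnit a b r ha hr)))), by
      have hu : (GabrUnit a b r ha hr) ^ a = 1 := by
        ext
        push_cast
        rw [GabrUnit, IsUnit.unit_spec]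
        have h : ((r ^ a : ℤ) : ZMod b) = ((1 : ℤ) : ZMod b) :=
          (ZMod.intCast_eq_intCast_iff _ _ _).mpr hr
        push_cast at h
        exact h
      rw [zmultiplesHom_apply, ← ofMul_zpow, ofMul_eq_zero,
        zpow_natCast, ← map_pow, ← map_pow, hu, map_one, map_one]⟩)

/-- `G_{a,b,r}`: the semidirect product `(ℤ/bℤ) ⋊ (ℤ/aℤ)` in which the generator `1` of
`ℤ/aℤ` acts on `ℤ/bℤ` as multiplication by `r`. -/
abbrev Gabr (a b : ℕ) (r : ℤ) (ha : a ≠ 0) (hr : r ^ a ≡ 1 [ZMOD (b : ℤ)]) : Type :=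
  Multiplicative (ZMod b) ⋊[GabrAct a b r ha hr] Multiplicative (ZMod a)



open Subgroup Pointwise

universe u

/-- A finite commutative Z-group is cyclic. -/
lemma ZG.isCyclic_of_comm (G : Type u) [CommGroup G] [Finite G] [IsZGroup G] :
    IsCyclic G := by
  apply IsCyclic.of_exponent_eq_card
  refine Nat.dvd_antisymm (Monoid.exponent_dvd.mpr fun g => orderOf_dvd_natCard g) ?_
  have hcard : Nat.card G ≠ 0 := Nat.card_pos.ne'
  have hexp : Monoid.exponent G ≠ 0 := Monoid.exponent_ne_zero_of_finite
  rw [← Nat.factorization_le_iff_dvd hcard hexp]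
  intro p
  by_cases hp : p.Prime
  · haveI : Fact p.Prime := ⟨hp⟩
    obtain ⟨P⟩ : Nonempty (Sylow p G) := inferInstance
    have hcyc : IsCyclic P := IsZGroup.isZGroup p hp P
    obtain ⟨g, hg⟩ := hcyc.exists_generator
    have h1 : orderOf g = Nat.card P := orderOf_eq_card_of_forall_mem_zpowers hg
    have h2 : orderOf ((g : G)) = Nat.card P := by
      rw [← h1]; exact orderOf_injective (P : Subgroup G).subtype Subtype.coe_injective g
    have h3 : (p : ℕ) ^ (Nat.card G).factorization p ∣ Monoid.exponent G := by
      rw [← Sylow.card_eq_multiplicity P, ← h2]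
      exact Monoid.order_dvd_exponent _
    exact (Nat.Prime.pow_dvd_iff_le_factorization hp hexp).mp h3
  · simp [Nat.factorization_eq_zero_of_not_prime _ hp]

/-- Elements of the automorphism group of a cyclic group commute. -/
lemma ZG.mulAut_comm {G : Type u} [Group G] [IsCyclic G] (f g : MulAut G) :
    f * g = g * f := by
  obtain ⟨c, hc⟩ := IsCyclic.exists_generator (α := G)
  ext x
  obtain ⟨n, rfl⟩ := hc x
  obtain ⟨i, hi⟩ := hc (f c)
  obtain ⟨j, hj⟩ := hc (g c)
  simp only [MulAut.mul_apply, map_zpow, ← hi, ← hj, map_zpow, ← zpow_mul]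
  ring_nf

/-- Burnside: for a cyclic Sylow subgroup at the smallest prime divisor,
the normalizer equals (is contained in) the centralizer. -/
lemma ZG.norm_le_cent {G : Type u} [Group G] [Finite G] {p : ℕ} [hp : Fact p.Prime]
    (P : Sylow p G) (hcyc : IsCyclic P)
    (hmin : ∀ q : ℕ, q.Prime → q ∣ Nat.card G → p ≤ q) :
    Subgroup.normalizer ((P : Subgroup G) : Set G) ≤ Subgroup.centralizer ((P : Subgroup G) : Set G) := by
  set N := Subgroup.normalizer ((P : Subgroup G) : Set G) with hN
  have hPleN : (P : Subgroup G) ≤ N := le_normalizer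
  let P' : Sylow p N := P.subtype hPleN
  haveI : ((P : Subgroup G).subgroupOf N).Normal := Subgroup.normal_in_normalizer
  have hP'eq : (P' : Subgroup ↥N) = (P : Subgroup G).subgroupOf N := rfl
  haveI : ((P' : Subgroup ↥N)).Normal := by rw [hP'eq]; infer_instance
  -- the conjugation action
  let c : ↥N →* MulAut ↥(P' : Subgroup ↥N) := MulAut.conjNormal
  -- P' is cyclic
  have e : ↥((P : Subgroup G).subgroupOf N) ≃* ↥(P : Subgroup G) := subgroupOfEquivOfLe hPleN
  haveI hcyc' : IsCyclic ↥(P' : Subgroup ↥N) := by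
    rw [hP'eq]
    exact isCyclic_of_surjective e.symm e.symm.surjective
  -- the image of c is trivial
  have hc1 : ∀ g : ↥N, c g = 1 := by
    have hker : (P' : Subgroup ↥N) ≤ c.ker := by
      intro x hx
      have hcomm : ∀ a b : ↥(P' : Subgroup ↥N), a * b = b * a := fun a b => by
        letI := hcyc'.commGroup
        exact mul_comm a b
      rw [MonoidHom.mem_ker]
      have : ∀ y : ↥(P' : Subgroup ↥N), (c x) y = y := by
        intro y
        have h1 : ((c x) y : ↥N) = x * (y : ↥N) * x⁻¹ := MulAut.conjNormal_apply _ _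
        have h2 : (⟨x, hx⟩ : ↥(P' : Subgroup ↥N)) * y = y * ⟨x, hx⟩ := hcomm _ _
        have h3 : x * (y : ↥N) = (y : ↥N) * x := congrArg Subtype.val h2
        apply Subtype.ext
        rw [h1, h3, mul_inv_cancel_right]
      ext y
      rw [this y]
      rfl
    -- the range of c is trivial
    have hQ1 : Nat.card c.range = 1 := by
      by_contra hne
      -- pick a prime divisor q of the cardinality of the range
      set Q := c.range with hQ
      have hQpos : 0 < Nat.card Q := Nat.card_pos
      obtain ⟨q, hq, hqdvd⟩ : ∃ q : ℕ, q.Prime ∧ q ∣ Nat.card Q :=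
        ⟨(Nat.card Q).minFac, Nat.minFac_prime hne, Nat.minFac_dvd _⟩
      -- q divides |G|
      have hq1 : q ∣ Nat.card G := by
        calc q ∣ Nat.card Q := hqdvd
        _ = c.ker.index := (Subgroup.index_ker c).symm
        _ ∣ Nat.card ↥N := Subgroup.index_dvd_card _
        _ ∣ Nat.card G := Subgroup.card_subgroup_dvd_card N
      have hpq : p ≤ q := hmin q hq hq1
      -- q divides the totient of p ^ k
      have hcardP : Nat.card ↥(P' : Subgroup ↥N) = p ^ (Nat.card ↥N).factorization p :=
        Sylow.card_eq_multiplicity P'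
      have hq2 : q ∣ (Nat.card ↥(P' : Subgroup ↥N)).totient := by
        have hd : Nat.card Q ∣ Nat.card (MulAut ↥(P' : Subgroup ↥N)) :=
          Subgroup.card_subgroup_dvd_card Q
        rw [IsCyclic.card_mulAut] at hd
        exact hqdvd.trans hd
      have hqp : q = p := by
        rw [hcardP] at hq2
        rcases Nat.eq_zero_or_pos ((Nat.card ↥N).factorization p) with hk | hk
        · rw [hk, pow_zero, Nat.totient_one, Nat.dvd_one] at hq2
          exact absurd hq2 hq.ne_one
        · rw [Nat.totient_prime_pow hp.out hk] at hq2
          rcases (Nat.Prime.dvd_mul hq).mp hq2 with h | h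
          · exact (Nat.prime_dvd_prime_iff_eq hq hp.out).mp (hq.dvd_of_dvd_pow h)
          · have h2 : 2 ≤ p := hp.out.two_le
            have h3 : q ≤ p - 1 := Nat.le_of_dvd (by omega) h
            omega
      have hpn : ¬ p ∣ Nat.card Q := by
        have h1 : Nat.card Q = c.ker.index := (Subgroup.index_ker c).symm
        have h2 : c.ker.index ∣ (P' : Subgroup ↥N).index := Subgroup.index_dvd_of_le hker
        intro hdvd
        rw [h1] at hdvd
        exact Sylow.not_dvd_index P' (hdvd.trans h2)
      exact hpn (hqp ▸ hqdvd)
    intro g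
    have : c g ∈ c.range := ⟨g, rfl⟩
    have hsub : Subsingleton c.range := Nat.card_eq_one_iff_unique.mp hQ1 |>.1
    have h1 : (⟨c g, this⟩ : c.range) = ⟨1, one_mem _⟩ := Subsingleton.elim _ _
    exact congrArg Subtype.val h1
  intro g hg
  rw [Subgroup.mem_centralizer_iff]
  intro h hh
  have h1 : c ⟨g, hg⟩ = 1 := hc1 ⟨g, hg⟩
  have h2 : ∀ y : ↥(P' : Subgroup ↥N), (c ⟨g, hg⟩) y = y := fun y => by rw [h1]; rfl
  have hhN : h ∈ N := hPleN hh
  have hy : (⟨h, hhN⟩ : ↥N) ∈ (P' : Subgroup ↥N) := by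
    rw [hP'eq, Subgroup.mem_subgroupOf]; exact hh
  have := h2 ⟨⟨h, hhN⟩, hy⟩
  have h3 : ((c ⟨g, hg⟩) ⟨⟨h, hhN⟩, hy⟩ : ↥N) = ⟨g, hg⟩ * ⟨h, hhN⟩ * ⟨g, hg⟩⁻¹ :=
    MulAut.conjNormal_apply _ _
  have h4 : (⟨g, hg⟩ : ↥N) * ⟨h, hhN⟩ * ⟨g, hg⟩⁻¹ = ⟨h, hhN⟩ := by
    rw [← h3, this]
  have h5 : g * h * g⁻¹ = h := congrArg Subtype.val h4
  calc h * g = (g * h * g⁻¹) * g := by rw [h5]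
  _ = g * h := by group

/-- Z-groups are solvable. -/
lemma ZG.isSolvable (G : Type u) [Group G] [Finite G] [IsZGroup G] : IsSolvable G := by
  generalize hn : Nat.card G = n
  induction n using Nat.strong_induction_on generalizing G with
  | _ n ih =>
  subst hn
  rcases eq_or_ne (Nat.card G) 1 with h1 | h1
  · haveI : Subsingleton G := Nat.card_eq_one_iff_unique.mp h1 |>.1
    exact isSolvable_of_comm (fun a b => Subsingleton.elim _ _)
  · set p := (Nat.card G).minFac with hp
    haveI hpf : Fact p.Prime := ⟨Nat.minFac_prime h1⟩
    have hpdvd : p ∣ Nat.card G := Nat.minFac_dvd _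
    obtain ⟨P⟩ : Nonempty (Sylow p G) := inferInstance
    have hcyc : IsCyclic P := IsZGroup.isZGroup p hpf.out P
    have hmin : ∀ q : ℕ, q.Prime → q ∣ Nat.card G → p ≤ q := fun q hq hqd =>
      Nat.minFac_le_of_dvd hq.two_le hqd
    have hnc := ZG.norm_le_cent P hcyc hmin
    haveI : (P : Subgroup G).FiniteIndex := inferInstance
    set f := MonoidHom.transferSylow P hnc with hf
    have hcompl := MonoidHom.ker_transferSylow_isComplement' P hnc
    -- the kernel is smaller than G
    have hcard : Nat.card f.ker * Nat.card P = Nat.card G := hcompl.card_mul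
    have hPgt : 1 < Nat.card P := by
      rw [Sylow.card_eq_multiplicity P]
      have hk : 0 < (Nat.card G).factorization p :=
        (Nat.Prime.factorization_pos_of_dvd hpf.out Nat.card_pos.ne' hpdvd)
      exact Nat.one_lt_pow hk.ne' hpf.out.one_lt
    have hlt : Nat.card f.ker < Nat.card G := by
      have h0 : 0 < Nat.card f.ker := Nat.card_pos
      nlinarith [hcard]
    haveI : IsSolvable ↥f.ker := ih _ hlt ↥f.ker rfl
    haveI : IsSolvable ↥(P : Subgroup G) := by
      letI := hcyc.commGroup
      exact isSolvable_of_comm fun a b => mul_comm a b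
    exact solvable_of_ker_le_range f.ker.subtype f (le_of_eq (Subgroup.range_subtype _).symm)

/-- Z-groups are metabelian. -/
lemma ZG.derived_two (G : Type u) [Group G] [Finite G] [IsZGroup G] :
    derivedSeries G 2 = ⊥ := by
  generalize hn : Nat.card G = n
  induction n using Nat.strong_induction_on generalizing G with
  | _ n ih =>
  subst hn
  by_contra h2
  haveI : IsSolvable G := ZG.isSolvable G
  obtain ⟨m, hm⟩ := (isSolvable_def G).mp ‹_›
  classical
  have hex : ∃ k, derivedSeries G k = ⊥ := ⟨m, hm⟩
  set k := Nat.find hex with hk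
  have hkbot : derivedSeries G k = ⊥ := Nat.find_spec hex
  have hk1 : 1 ≤ k := by
    rcases Nat.eq_zero_or_pos k with h | h
    · exfalso
      apply h2
      have : derivedSeries G 0 = ⊥ := h ▸ hkbot
      rw [derivedSeries_zero] at this
      exact le_bot_iff.mp (this ▸ le_top)
    · exact h
  set n₀ := k - 1 with hn₀
  have hA : derivedSeries G n₀ ≠ ⊥ := Nat.find_min hex (by omega)
  have hA1 : derivedSeries G (n₀ + 1) = ⊥ := by
    have : n₀ + 1 = k := by omega
    rw [this]; exact hkbot
  set A := derivedSeries G n₀ with hAdef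
  haveI hAnorm : A.Normal := derivedSeries_normal G n₀
  have hAcomm : ∀ x ∈ A, ∀ y ∈ A, x * y = y * x := by
    have hbot : ⁅A, A⁆ = ⊥ := by rw [hAdef, ← derivedSeries_succ]; exact hA1
    intro x hx y hy
    exact (Subgroup.mem_centralizer_iff.mp
      (Subgroup.commutator_eq_bot_iff_le_centralizer.mp hbot hx) y hy).symm
  letI hAcomm' : CommGroup ↥A :=
    { (inferInstance : Group ↥A) with mul_comm := fun a b => Subtype.ext (hAcomm a a.2 b b.2) }
  haveI hAcyc : IsCyclic ↥A := ZG.isCyclic_of_comm ↥A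
  set c : G →* MulAut ↥A := MulAut.conjNormal with hc
  have hcker : commutator G ≤ c.ker := by
    rw [_root_.commutator_def]
    rw [Subgroup.commutator_le]
    intro g₁ _ g₂ _
    rw [MonoidHom.mem_ker, map_commutatorElement]
    exact commutatorElement_eq_one_iff_commute.mpr (ZG.mulAut_comm (c g₁) (c g₂))
  have key : ∀ g ∈ commutator G, ∀ a ∈ A, g * a * g⁻¹ = a := by
    intro g hg a ha
    have h1 : c g = 1 := hcker hg
    have h2 : (c g) ⟨a, ha⟩ = ⟨a, ha⟩ := by rw [h1]; rfl
    have h3 : ((c g) ⟨a, ha⟩ : G) = g * a * g⁻¹ := MulAut.conjNormal_apply _ _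
    rw [← h3, h2]
  -- induction applied to G ⧸ A
  have hlt : Nat.card (G ⧸ A) < Nat.card G := by
    have h1 : Nat.card G = Nat.card (G ⧸ A) * Nat.card ↥A :=
      Subgroup.card_eq_card_quotient_mul_card_subgroup A
    have h2 : 1 < Nat.card ↥A := (Subgroup.one_lt_card_iff_ne_bot A).mpr hA
    have h3 : 0 < Nat.card (G ⧸ A) := Nat.card_pos
    nlinarith
  have hquot : derivedSeries (G ⧸ A) 2 = ⊥ := ih _ hlt _ rfl
  have hD2A : derivedSeries G 2 ≤ A := by
    intro x hx
    have h1 : (QuotientGroup.mk' A) x ∈ (derivedSeries G 2).map (QuotientGroup.mk' A) :=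
      Subgroup.mem_map_of_mem _ hx
    have h2 := map_derivedSeries_le_derivedSeries (QuotientGroup.mk' A) 2 h1
    rw [hquot, Subgroup.mem_bot] at h2
    rwa [← QuotientGroup.ker_mk' A, MonoidHom.mem_ker]
  -- the commutator subgroup is commutative
  set K := ↥(commutator G) with hK
  have hcenter : commutator K ≤ Subgroup.center K := by
    intro x hx
    have hx1 : (x : G) ∈ derivedSeries G 2 := by
      rw [derivedSeries_succ, derivedSeries_one]
      have htop : Subgroup.map (_root_.commutator G).subtype ⊤ = _root_.commutator G := by
        rw [← MonoidHom.range_eq_map, Subgroup.range_subtype]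
      have h1 : Subgroup.map (_root_.commutator G).subtype ⁅(⊤ : Subgroup K), (⊤ : Subgroup K)⁆ ≤
          ⁅_root_.commutator G, _root_.commutator G⁆ := by
        rw [Subgroup.map_commutator, htop]
      exact h1 (Subgroup.mem_map_of_mem _ hx)
    rw [Subgroup.mem_center_iff]
    intro y
    apply Subtype.ext
    have h3 := key (y : G) y.2 (x : G) (hD2A hx1)
    show (y : G) * (x : G) = (x : G) * (y : G)
    conv_rhs => rw [← h3]
    group
  have hKcomm : ∀ a b : K, a * b = b * a := by
    letI : CommGroup (K ⧸ commutator K) := Abelianization.commGroup K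
    haveI : IsZGroup (K ⧸ commutator K) := inferInstance
    haveI : IsCyclic (K ⧸ commutator K) := ZG.isCyclic_of_comm _
    refine commutative_of_cyclic_center_quotient (QuotientGroup.mk' (commutator K)) ?_
    rw [QuotientGroup.ker_mk']
    exact hcenter
  apply h2
  rw [derivedSeries_succ, derivedSeries_one, eq_bot_iff, Subgroup.commutator_le]
  intro g₁ hg₁ g₂ hg₂
  rw [Subgroup.mem_bot]
  apply commutatorElement_eq_one_iff_commute.mpr
  have := hKcomm ⟨g₁, hg₁⟩ ⟨g₂, hg₂⟩
  exact congrArg Subtype.val this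

section
variable (G : Type u) [Group G] [Finite G] [IsZGroup G]

lemma ZG.commutator_comm : ∀ a ∈ commutator G, ∀ b ∈ commutator G, a * b = b * a := by
  have hbot : ⁅commutator G, commutator G⁆ = ⊥ := by
    have := ZG.derived_two G
    rwa [derivedSeries_succ, derivedSeries_one] at this
  intro x hx y hy
  exact (Subgroup.mem_centralizer_iff.mp
    (Subgroup.commutator_eq_bot_iff_le_centralizer.mp hbot hx) y hy).symm

lemma ZG.commutator_isCommutative : IsMulCommutative ↥(commutator G) :=
  ⟨⟨fun a b => Subtype.ext (ZG.commutator_comm G a a.2 b b.2)⟩⟩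

lemma ZG.isCyclic_commutator : IsCyclic ↥(commutator G) := by
  letI : CommGroup ↥(commutator G) := { (inferInstance : Group ↥(commutator G)) with
    mul_comm := fun a b => Subtype.ext (ZG.commutator_comm G a a.2 b b.2) }
  exact ZG.isCyclic_of_comm _

lemma ZG.isCyclic_quot : IsCyclic (G ⧸ commutator G) := by
  letI : CommGroup (G ⧸ commutator G) := Abelianization.commGroup G
  exact ZG.isCyclic_of_comm _

end

/-- The "twisted difference" map `w ↦ w⁻¹ ⬝ ˣw`. -/
def ZG.tau {G : Type u} [Group G] (x w : G) : G := w⁻¹ * (x * w * x⁻¹)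

lemma ZG.tau_mem {G : Type u} [Group G] (x : G) {w : G} (hw : w ∈ commutator G) :
    ZG.tau x w ∈ commutator G :=
  (commutator G).mul_mem ((commutator G).inv_mem hw)
    ((Subgroup.commutator_normal (⊤ : Subgroup G) ⊤).conj_mem w hw x)

/-- The twisted difference map is surjective on the commutator subgroup. -/
lemma ZG.tau_surj (G : Type u) [Group G] [Finite G] [IsZGroup G] (x : G)
    (hx : zpowers x ⊔ commutator G = ⊤) :
    ∀ v ∈ commutator G, ∃ w ∈ commutator G, ZG.tau x w = v := by
  set B := commutator G with hB
  haveI hBnorm : (commutator G).Normal := Subgroup.commutator_normal ⊤ ⊤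
  have hc := ZG.commutator_comm G
  -- tau as a homomorphism on B
  have hmap : ∀ v w : ↥B, ZG.tau x ((v * w : ↥B) : G) = ZG.tau x v * ZG.tau x w := by
    intro v w
    have e1 : ZG.tau x ((v * w : ↥B) : G) =
        (w : G)⁻¹ * ((v : G)⁻¹ * (x * v * x⁻¹)) * (x * w * x⁻¹) := by
      show ZG.tau x ((v : G) * w) = _
      unfold ZG.tau; group
    have e2 : (w : G)⁻¹ * ((v : G)⁻¹ * (x * v * x⁻¹)) =
        ((v : G)⁻¹ * (x * v * x⁻¹)) * (w : G)⁻¹ :=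
      hc _ (B.inv_mem w.2) _ (ZG.tau_mem x v.2)
    rw [e1, e2]
    show _ = (v : G)⁻¹ * (x * v * x⁻¹) * ((w : G)⁻¹ * (x * w * x⁻¹))
    group
  let τ : ↥B →* G := { toFun := fun w => ZG.tau x w, map_one' := by show ZG.tau x ((1:↥B):G) = 1; rw [OneMemClass.coe_one]; unfold ZG.tau; group,
                       map_mul' := hmap }
  set D := τ.range with hD
  have hDB : D ≤ B := by
    rintro _ ⟨w, rfl⟩
    exact ZG.tau_mem x w.2
  -- D is normal
  haveI hDnorm : D.Normal := by
    rw [← Subgroup.normalizer_eq_top_iff]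
    apply top_unique
    rw [← hx]
    apply sup_le
    · rw [zpowers_le]
      rw [Subgroup.mem_normalizer_iff]
      intro h
      constructor
      · rintro ⟨w, rfl⟩
        refine ⟨⟨x * w * x⁻¹, hBnorm.conj_mem (w:G) w.2 x⟩, ?_⟩
        show ZG.tau x (x * (w : G) * x⁻¹) = x * ZG.tau x (w : G) * x⁻¹
        unfold ZG.tau; group
      · rintro ⟨w, hw⟩
        refine ⟨⟨x⁻¹ * w * x, by
          have := hBnorm.conj_mem (w:G) w.2 x⁻¹
          simpa using this⟩, ?_⟩
        show ZG.tau x (x⁻¹ * (w : G) * x) = h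
        have : ZG.tau x (x⁻¹ * (w : G) * x) = x⁻¹ * ZG.tau x (w : G) * x := by
          unfold ZG.tau; group
        rw [this]
        show x⁻¹ * τ w * x = h
        rw [hw]; group
    · intro b hb
      rw [Subgroup.mem_normalizer_iff]
      intro h
      constructor
      · intro hh
        have hhB : h ∈ B := hDB hh
        have : b * h * b⁻¹ = h := by
          rw [hc b hb h hhB]; group
        rwa [this]
      · intro hh
        have hhB : b * h * b⁻¹ ∈ B := hDB hh
        have hhB' : h ∈ B := by
          have := B.mul_mem (B.mul_mem (B.inv_mem hb) hhB) hb
          simpa [mul_assoc] using this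
        have : b * h * b⁻¹ = h := by
          rw [hc b hb h hhB']; group
        rwa [this] at hh
  -- the quotient by D is abelian
  have hcomm_quot : ∀ u v : G ⧸ D, u * v = v * u := by
    haveI : IsCyclic (G ⧸ B) := ZG.isCyclic_quot G
    refine commutative_of_cyclic_center_quotient
      (QuotientGroup.map D B (MonoidHom.id G) (fun g hg => hDB hg)) ?_
    intro y hy
    obtain ⟨g, rfl⟩ := QuotientGroup.mk'_surjective D y
    rw [MonoidHom.mem_ker] at hy
    have hgB : g ∈ B := by
      have : QuotientGroup.map D B (MonoidHom.id G) (fun g hg => hDB hg)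
          ((QuotientGroup.mk' D) g) = QuotientGroup.mk g := rfl
      rw [this] at hy
      exact (QuotientGroup.eq_one_iff g).mp hy
    -- the subgroup of elements commuting mod D with everything in B
    set C : Subgroup G := Subgroup.comap (QuotientGroup.mk' D)
      (Subgroup.centralizer ((QuotientGroup.mk' D) '' (B : Set G))) with hC
    have hxC : x ∈ C := by
      rw [hC, Subgroup.mem_comap, Subgroup.mem_centralizer_iff]
      rintro _ ⟨b, hb, rfl⟩
      show QuotientGroup.mk (b * x) = QuotientGroup.mk (x * b)
      rw [QuotientGroup.eq]
      have : (b * x)⁻¹ * (x * b) = ZG.tau x (x⁻¹ * b * x) := by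
        unfold ZG.tau; group
      rw [this]
      exact ⟨⟨x⁻¹ * b * x, by
        have := hBnorm.conj_mem b hb x⁻¹
        simpa using this⟩, rfl⟩
    have hBC : B ≤ C := by
      intro b' hb'
      rw [hC, Subgroup.mem_comap, Subgroup.mem_centralizer_iff]
      rintro _ ⟨b, hb, rfl⟩
      show QuotientGroup.mk (b * b') = QuotientGroup.mk (b' * b)
      rw [hc b hb b' hb']
    have hCtop : C = ⊤ := top_unique (hx ▸ sup_le (zpowers_le.mpr hxC) hBC)
    rw [Subgroup.mem_center_iff]
    intro z
    obtain ⟨h, rfl⟩ := QuotientGroup.mk'_surjective D z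
    have hhC : h ∈ C := hCtop ▸ Subgroup.mem_top h
    rw [hC, Subgroup.mem_comap, Subgroup.mem_centralizer_iff] at hhC
    exact (hhC _ ⟨g, hgB, rfl⟩).symm
  -- conclude B ≤ D
  have hBD : B ≤ D := by
    have : commutator G ≤ (QuotientGroup.mk' D).ker := by
      rw [_root_.commutator_def, Subgroup.commutator_le]
      intro g₁ _ g₂ _
      rw [MonoidHom.mem_ker, map_commutatorElement]
      exact commutatorElement_eq_one_iff_commute.mpr (hcomm_quot _ _)
    rwa [QuotientGroup.ker_mk'] at this
  intro v hv
  obtain ⟨w, hw⟩ := hBD hv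
  exact ⟨w, w.2, hw⟩

/-- Existence of a good complement generator. -/
lemma ZG.exists_gen (G : Type u) [Group G] [Finite G] [IsZGroup G] :
    ∃ x : G, zpowers x ⊔ commutator G = ⊤ ∧
      orderOf ((x : G ⧸ commutator G)) = (commutator G).index := by
  haveI := ZG.isCyclic_quot G
  obtain ⟨ξ, hξ⟩ := IsCyclic.exists_generator (α := G ⧸ commutator G)
  obtain ⟨x, rfl⟩ := QuotientGroup.mk_surjective ξ
  refine ⟨x, ?_, ?_⟩
  · rw [eq_top_iff]
    intro g _
    obtain ⟨k, hk⟩ := hξ (QuotientGroup.mk g)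
    have hk' : ((x ^ k : G) : G ⧸ commutator G) = QuotientGroup.mk g := by
      rw [← hk]; rfl
    have hmem : (x ^ k)⁻¹ * g ∈ commutator G := by
      rw [← QuotientGroup.eq]; exact hk'
    have : g = x ^ k * ((x ^ k)⁻¹ * g) := by group
    rw [this]
    exact Subgroup.mul_mem _ (Subgroup.mem_sup_left (zpow_mem (mem_zpowers x) k))
      (Subgroup.mem_sup_right hmem)
  · rw [orderOf_eq_card_of_forall_mem_zpowers hξ, Subgroup.index_eq_card]

/-- The commutator subgroup of a Z-group is a Hall subgroup. -/
lemma ZG.coprime (G : Type u) [Group G] [Finite G] [IsZGroup G] :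
    Nat.Coprime (Nat.card ↥(commutator G)) (commutator G).index := by
  set B := commutator G with hBdef
  haveI hBnorm : (commutator G).Normal := Subgroup.commutator_normal ⊤ ⊤
  have hc := ZG.commutator_comm G
  by_contra hco
  -- a common prime divisor
  set q := (Nat.gcd (Nat.card ↥B) B.index).minFac with hq
  haveI hqp : Fact q.Prime := ⟨Nat.minFac_prime hco⟩
  have hqB : q ∣ Nat.card ↥B := (Nat.minFac_dvd _).trans (Nat.gcd_dvd_left _ _)
  have hqI : q ∣ B.index := (Nat.minFac_dvd _).trans (Nat.gcd_dvd_right _ _)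
  obtain ⟨x, hxsup, hxord⟩ := ZG.exists_gen G
  -- the q-primary part of B
  set S : Subgroup G :=
    { carrier := {g | g ∈ B ∧ ∃ k : ℕ, g ^ q ^ k = 1}
      one_mem' := ⟨B.one_mem, 0, one_pow _⟩
      mul_mem' := by
        rintro a b ⟨haB, ka, hka⟩ ⟨hbB, kb, hkb⟩
        refine ⟨B.mul_mem haB hbB, ka + kb, ?_⟩
        have hab : Commute a b := hc a haB b hbB
        rw [hab.mul_pow]
        have h1 : a ^ q ^ (ka + kb) = 1 := by
          rw [pow_add, pow_mul, hka, one_pow]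
        have h2 : b ^ q ^ (ka + kb) = 1 := by
          rw [pow_add, mul_comm (q ^ ka) (q ^ kb), pow_mul, hkb, one_pow]
        rw [h1, h2, one_mul]
      inv_mem' := by
        rintro a ⟨haB, ka, hka⟩
        exact ⟨B.inv_mem haB, ka, by rw [inv_pow, hka, inv_one]⟩ } with hSdef
  have hSB : S ≤ B := fun g hg => hg.1
  haveI hSnorm : S.Normal := by
    constructor
    rintro n ⟨hnB, k, hk⟩ g
    exact ⟨hBnorm.conj_mem n hnB g, k, by rw [conj_pow, hk, mul_one, mul_inv_cancel]⟩
  have hSq : IsPGroup q ↥S := fun g => ⟨g.2.2.choose, by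
    apply Subtype.ext
    rw [SubmonoidClass.coe_pow]
    exact g.2.2.choose_spec⟩
  obtain ⟨m, hm⟩ := hSq.exists_card_eq
  -- m ≥ 1
  have hm1 : 1 ≤ m := by
    haveI : Fintype ↥B := Fintype.ofFinite _
    obtain ⟨t, ht⟩ := exists_prime_orderOf_dvd_card q (by
      rwa [← Nat.card_eq_fintype_card] : q ∣ Fintype.card ↥B)
    have htS : (t : G) ∈ S := ⟨t.2, 1, by
      have : (t : ↥B) ^ q = 1 := by rw [← ht]; exact pow_orderOf_eq_one t
      rw [pow_one, ← SubmonoidClass.coe_pow, this, OneMemClass.coe_one]⟩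
    have hot : orderOf (⟨(t : G), htS⟩ : ↥S) = q := by
      rw [← orderOf_injective S.subtype Subtype.coe_injective]
      show orderOf ((t : G)) = q
      rw [← ht]
      exact orderOf_injective B.subtype Subtype.coe_injective t
    have : q ∣ Nat.card ↥S := hot ▸ orderOf_dvd_natCard _
    rw [hm] at this
    by_contra hm0
    push_neg at hm0
    interval_cases m
    simpa using hqp.out.one_lt.ne' (Nat.dvd_one.mp this)
  -- a generator v₀ of S
  haveI : IsCyclic ↥B := ZG.isCyclic_commutator G
  haveI : IsCyclic ↥(S.subgroupOf B) := Subgroup.isCyclic _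
  haveI : IsCyclic ↥S :=
    isCyclic_of_surjective _ (subgroupOfEquivOfLe hSB).surjective
  obtain ⟨v', hv'⟩ := IsCyclic.exists_generator (α := ↥S)
  set v₀ := (v' : G) with hv₀
  have hv₀S : v₀ ∈ S := v'.2
  have hordv : orderOf v₀ = q ^ m := by
    rw [← hm, ← orderOf_eq_card_of_forall_mem_zpowers hv']
    exact orderOf_injective S.subtype Subtype.coe_injective v'
  -- the subgroup H
  set H := zpowers x ⊔ S with hHdef
  have hxH : x ∈ H := Subgroup.mem_sup_left (mem_zpowers x)
  have hSH : S ≤ H := le_sup_right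
  set S' := S.subgroupOf H with hS'def
  haveI : S'.Normal := Subgroup.normal_subgroupOf
  -- q divides the order of the quotient H / S'
  have hqKQ : q ∣ Nat.card (↥H ⧸ S') := by
    have hstep : ∀ j : ℕ, ((⟨x, hxH⟩ : ↥H) : ↥H ⧸ S') ^ j = 1 → B.index ∣ j := by
      intro j hj
      have h1 : ((⟨x, hxH⟩ : ↥H) ^ j : ↥H) ∈ S' := by
        rwa [← QuotientGroup.eq_one_iff ((⟨x, hxH⟩ : ↥H) ^ j)]
      have h2 : x ^ j ∈ S := by
        rw [Subgroup.mem_subgroupOf] at h1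
        exact h1
      have h3 : ((x : G ⧸ B)) ^ j = 1 := by
        rw [← QuotientGroup.mk_pow, QuotientGroup.eq_one_iff]
        exact hSB h2
      rw [← hxord]
      exact orderOf_dvd_iff_pow_eq_one.mpr h3
    have h4 : B.index ∣ orderOf (((⟨x, hxH⟩ : ↥H) : ↥H ⧸ S')) :=
      hstep _ (pow_orderOf_eq_one _)
    calc q ∣ B.index := hqI
    _ ∣ orderOf (((⟨x, hxH⟩ : ↥H) : ↥H ⧸ S')) := h4
    _ ∣ Nat.card (↥H ⧸ S') := orderOf_dvd_natCard _
  have hcardS' : Nat.card ↥S' = q ^ m := by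
    rw [← hm]
    exact Nat.card_congr (subgroupOfEquivOfLe hSH).toEquiv
  have hqK : q ^ (m + 1) ∣ Nat.card ↥H := by
    rw [Subgroup.card_eq_card_quotient_mul_card_subgroup S', pow_succ, mul_comm (q^m) q,
      hcardS']
    exact Nat.mul_dvd_mul hqKQ dvd_rfl
  -- a Sylow q-subgroup of H containing S'
  have hSq' : IsPGroup q ↥S' := fun g => by
    obtain ⟨k, hk⟩ := (Subgroup.mem_subgroupOf.mp g.2).2
    exact ⟨k, by
      apply Subtype.ext; apply Subtype.ext
      rw [SubmonoidClass.coe_pow, SubmonoidClass.coe_pow]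
      exact hk⟩
  obtain ⟨Q, hS'Q⟩ := hSq'.exists_le_sylow
  haveI : IsCyclic ↥(Q : Subgroup ↥H) := IsZGroup.isZGroup q hqp.out Q
  obtain ⟨u', hu'⟩ := IsCyclic.exists_generator (α := ↥(Q : Subgroup ↥H))
  set u₀ := ((u' : ↥H)) with hu₀
  have hordu : orderOf u₀ = Nat.card ↥(Q : Subgroup ↥H) := by
    rw [← orderOf_eq_card_of_forall_mem_zpowers hu']
    exact orderOf_injective (Q : Subgroup ↥H).subtype Subtype.coe_injective u'
  -- card Q = q ^ f with f ≥ m + 1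
  have hcardQ : Nat.card ↥(Q : Subgroup ↥H) = q ^ (Nat.card ↥H).factorization q :=
    Sylow.card_eq_multiplicity Q
  set f := (Nat.card ↥H).factorization q with hf
  have hfm : m + 1 ≤ f :=
    (hqp.out.pow_dvd_iff_le_factorization Nat.card_pos.ne').mp hqK
  -- v₀ in Q
  have hvH : v₀ ∈ H := hSH hv₀S
  have hvQ : (⟨v₀, hvH⟩ : ↥H) ∈ (Q : Subgroup ↥H) := hS'Q (by
    rw [Subgroup.mem_subgroupOf]; exact hv₀S)
  have hordvK : orderOf (⟨v₀, hvH⟩ : ↥H) = q ^ m := by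
    rw [← hordv]
    exact (orderOf_injective H.subtype Subtype.coe_injective ⟨v₀, hvH⟩).symm
  -- v = u₀ ^ cn
  have hvz : (⟨v₀, hvH⟩ : ↥H) ∈ zpowers u₀ := by
    obtain ⟨k, hk⟩ := hu' ⟨⟨v₀, hvH⟩, hvQ⟩
    refine ⟨k, ?_⟩
    show u₀ ^ k = (⟨v₀, hvH⟩ : ↥H)
    have h := congrArg Subtype.val hk
    simpa [SubgroupClass.coe_zpow] using h
  obtain ⟨cn, hcn⟩ : ∃ n : ℕ, u₀ ^ n = (⟨v₀, hvH⟩ : ↥H) := by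
    have hfin : IsOfFinOrder u₀ := isOfFinOrder_of_finite u₀
    rw [← hfin.mem_powers_iff_mem_zpowers] at hvz
    exact (Submonoid.mem_powers_iff _ _).mp hvz
  -- q ∣ cn
  have hgcd : Nat.gcd (q ^ f) cn = q ^ (f - m) := by
    have h1 : orderOf (u₀ ^ cn) = orderOf u₀ / Nat.gcd (orderOf u₀) cn := orderOf_pow u₀
    rw [hcn, hordvK, hordu, hcardQ] at h1
    have h2 : Nat.gcd (q ^ f) cn ∣ q ^ f := Nat.gcd_dvd_left _ _
    have h3 : q ^ f = q ^ m * Nat.gcd (q ^ f) cn := by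
      rw [h1, Nat.div_mul_cancel h2]
    have h4 : q ^ f = q ^ m * q ^ (f - m) := by
      rw [← pow_add]
      congr 1
      omega
    have h5 : 0 < q ^ m := Nat.pow_pos (n := m) hqp.out.pos
    nlinarith [h3, h4]
  have hqcn : q ∣ cn := by
    have h1 : q ∣ Nat.gcd (q ^ f) cn := by
      rw [hgcd]
      exact dvd_pow_self q (by omega)
    exact h1.trans (Nat.gcd_dvd_right _ _)
  obtain ⟨c', hc'⟩ := hqcn
  set u := u₀ ^ c' with hu
  have hupow : u ^ q = (⟨v₀, hvH⟩ : ↥H) := by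
    rw [hu, ← pow_mul, mul_comm c' q, ← hc', hcn]
  set uG := ((u : ↥H) : G) with huG
  have hu_pow : uG ^ q = v₀ := by
    rw [huG, ← SubmonoidClass.coe_pow]
    exact congrArg Subtype.val hupow
  -- uG centralizes S
  have hu_cent : ∀ s ∈ S, Commute uG s := by
    intro s hs
    have hsH : s ∈ H := hSH hs
    have hsQ : (⟨s, hsH⟩ : ↥H) ∈ (Q : Subgroup ↥H) := hS'Q (by
      rw [Subgroup.mem_subgroupOf]; exact hs)
    obtain ⟨d, hd⟩ := hu' ⟨⟨s, hsH⟩, hsQ⟩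
    have hdz : u₀ ^ d = (⟨s, hsH⟩ : ↥H) := by
      have h := congrArg Subtype.val hd
      simpa [SubgroupClass.coe_zpow] using h
    have hcm : Commute u (⟨s, hsH⟩ : ↥H) := by
      rw [hu, ← hdz]
      exact ((Commute.refl u₀).pow_left c').zpow_right d
    have := congrArg Subtype.val hcm.eq
    exact this
  -- decompose uG = x ^ j * w
  obtain ⟨p, hp, w, hwS, hpw⟩ : ∃ p ∈ zpowers x, ∃ w ∈ (S : Set G), p * w = uG := by
    have h1 : uG ∈ H := (u : ↥H).2
    rw [hHdef] at h1
    have h2 : uG ∈ ((zpowers x : Subgroup G) : Set G) * (S : Set G) := by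
      rw [← Subgroup.mul_normal (zpowers x) S]
      exact h1
    exact Set.mem_mul.mp h2
  obtain ⟨j, hj⟩ := mem_zpowers_iff.mp hp
  -- the chain of equalities
  set tw := ZG.tau x w with htw
  have htwS : tw ∈ S := by
    rw [htw]
    unfold ZG.tau
    exact S.mul_mem (S.inv_mem hwS) (hSnorm.conj_mem w hwS x)
  have e1 : x * uG * x⁻¹ = uG * tw := by
    rw [← hpw, ← hj, htw]
    unfold ZG.tau
    group
  have e2 : x * v₀ * x⁻¹ = v₀ * tw ^ q := by
    rw [← hu_pow, ← conj_pow, e1, (hu_cent tw htwS).mul_pow]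
  have e3 : ZG.tau x v₀ = tw ^ q := by
    unfold ZG.tau
    rw [e2]
    group
  have e4 : tw ^ q = ZG.tau x (w ^ q) := by
    rw [htw]
    unfold ZG.tau
    have hconj : Commute (w⁻¹) (x * w * x⁻¹) :=
      hc _ (B.inv_mem (hSB hwS)) _ (hBnorm.conj_mem w (hSB hwS) x)
    rw [hconj.mul_pow, inv_pow, conj_pow]
  -- injectivity of tau on B
  have hF : Function.Injective (fun w : ↥B => (⟨ZG.tau x w, ZG.tau_mem x w.2⟩ : ↥B)) := by
    rw [Finite.injective_iff_surjective]
    intro v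
    obtain ⟨w, hwB, hw⟩ := ZG.tau_surj G x hxsup v v.2
    exact ⟨⟨w, hwB⟩, Subtype.ext hw⟩
  have e5 : v₀ = w ^ q := by
    have h1 : (⟨v₀, hSB hv₀S⟩ : ↥B) = ⟨w ^ q, B.pow_mem (hSB hwS) q⟩ := by
      apply hF
      apply Subtype.ext
      show ZG.tau x v₀ = ZG.tau x (w ^ q)
      rw [e3, e4]
    exact congrArg Subtype.val h1
  -- contradiction via orders
  have hwq : w ^ q ^ m = 1 := by
    have h1 : orderOf (⟨w, hwS⟩ : ↥S) ∣ Nat.card ↥S := orderOf_dvd_natCard _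
    rw [hm] at h1
    have h2 : orderOf w ∣ q ^ m := by
      rw [← orderOf_injective S.subtype Subtype.coe_injective ⟨w, hwS⟩] at h1
      exact h1
    exact orderOf_dvd_iff_pow_eq_one.mp h2
  have hv1 : v₀ ^ q ^ (m - 1) = 1 := by
    rw [e5, ← pow_mul]
    have hqm : q * q ^ (m - 1) = q ^ m := by
      rw [← pow_succ']
      congr 1
      omega
    rw [hqm, hwq]
  have : q ^ m ∣ q ^ (m - 1) := hordv ▸ orderOf_dvd_iff_pow_eq_one.mpr hv1
  have := (Nat.pow_dvd_pow_iff_le_right hqp.out.one_lt).mp this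
  omega

/-- Congruence of semidirect products. -/
def ZG.sdCongr {N : Type*} {H : Type*} {N' : Type*} {H' : Type*}
    [Group N] [Group H] [Group N'] [Group H']
    (φ : H →* MulAut N) (φ' : H' →* MulAut N') (e₁ : N ≃* N') (e₂ : H ≃* H')
    (hcompat : ∀ (h : H) (n : N), e₁ (φ h n) = φ' (e₂ h) (e₁ n)) :
    (N ⋊[φ] H) ≃* (N' ⋊[φ'] H') where
  toFun x := ⟨e₁ x.left, e₂ x.right⟩
  invFun x := ⟨e₁.symm x.left, e₂.symm x.right⟩
  left_inv x := by ext <;> simp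
  right_inv x := by ext <;> simp
  map_mul' x y := by
    ext
    · show e₁ (x.left * φ x.right y.left) = e₁ x.left * φ' (e₂ x.right) (e₁ y.left)
      rw [map_mul, hcompat]
    · show e₂ (x.right * y.right) = e₂ x.right * e₂ y.right
      rw [map_mul]

/-- Extensionality for homomorphisms out of `Multiplicative (ZMod a)`. -/
lemma ZG.hom_ext_zmod {a : ℕ} [NeZero a] {M : Type*} [Monoid M]
    {f g : Multiplicative (ZMod a) →* M}
    (h : f (Multiplicative.ofAdd 1) = g (Multiplicative.ofAdd 1)) : f = g := by
  refine MonoidHom.ext fun x => ?_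
  have hx : x = (Multiplicative.ofAdd (1 : ZMod a)) ^ (ZMod.val (n := a) (Multiplicative.toAdd x)) := by
    have h1 : (ZMod.val (n := a) (Multiplicative.toAdd x) • (1 : ZMod a)) = Multiplicative.toAdd x := by
      rw [nsmul_eq_mul, mul_one, ZMod.natCast_val, ZMod.cast_id]
    rw [← ofAdd_nsmul, h1]
    rfl
  rw [hx, map_pow, map_pow, h]

/-- Every element of `↥HH` is a power of the image of the generator. -/
lemma ZG.gen_pow {G : Type u} [Group G] {HH : Subgroup G} {a : ℕ} [NeZero a]
    (eH : Multiplicative (ZMod a) ≃* ↥HH) (h : ↥HH) :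
    h = eH (Multiplicative.ofAdd 1) ^ ((Multiplicative.toAdd (eH.symm h)).val) := by
  apply eH.symm.injective
  rw [map_pow]
  have h1 : ((Multiplicative.toAdd (eH.symm h)).val • (1 : ZMod a))
      = Multiplicative.toAdd (eH.symm h) := by
    rw [nsmul_eq_mul, mul_one, ZMod.natCast_val, ZMod.cast_id]
  rw [MulEquiv.symm_apply_apply, ← ofAdd_nsmul, h1]
  simp

/-- An internal semidirect product decomposition from a normal complement. -/
noncomputable def ZG.complEquiv {G : Type u} [Group G] {B HH : Subgroup G} [B.Normal]
    (hcompl : B.IsComplement' HH) :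
    (↥B ⋊[(MulAut.conjNormal : G →* MulAut ↥B).comp HH.subtype] ↥HH) ≃* G := by
  set φ := (MulAut.conjNormal : G →* MulAut ↥B).comp HH.subtype with hφ
  have hcond : ∀ (h : ↥HH), B.subtype.comp (MulEquiv.toMonoidHom (φ h)) =
      (MulEquiv.toMonoidHom (MulAut.conj (HH.subtype h))).comp B.subtype := by
    intro h
    ext n
    show ((MulAut.conjNormal ((h : G))) n : G) = MulAut.conj ((h : G)) (n : G)
    rw [MulAut.conjNormal_apply]
    rfl
  set f := SemidirectProduct.lift B.subtype HH.subtype hcond with hfdef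
  have happ : ∀ x : ↥B ⋊[φ] ↥HH, f x = (x.left : G) * (x.right : G) := by
    intro x
    have h1 : x = SemidirectProduct.inl x.left * SemidirectProduct.inr x.right := by
      rw [SemidirectProduct.inl_left_mul_inr_right]
    rw [h1, map_mul, SemidirectProduct.lift_inl, SemidirectProduct.lift_inr]
    simp
  refine MulEquiv.ofBijective f ⟨?_, ?_⟩
  · rw [injective_iff_map_eq_one]
    intro x hx
    rw [happ] at hx
    have hleft : (x.left : G) ∈ B ⊓ HH := by
      constructor
      · exact x.left.2
      · have : (x.left : G) = (x.right : G)⁻¹ :=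
          eq_inv_of_mul_eq_one_left hx
        rw [this]
        exact HH.inv_mem x.right.2
    rw [hcompl.disjoint.eq_bot] at hleft
    have hl : x.left = 1 := Subtype.ext (Subgroup.mem_bot.mp hleft)
    have hr : x.right = 1 := by
      apply Subtype.ext
      have : (x.left : G) * x.right = 1 := hx
      rw [hl] at this
      simpa using this
    ext
    · rw [hl]; rfl
    · rw [hr]; rfl
  · intro g
    obtain ⟨⟨n, h⟩, hnh, -⟩ := hcompl.existsUnique g
    exact ⟨⟨n, h⟩, by rw [happ]; exact hnh⟩

/-- Every finite group `G` all of whose Sylow subgroups are cyclic is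
isomorphic to `G_{a,b,r}` for some positive integers `a, b` and integer `r` with
`0 ≤ r < b` (with `r = 0` when `b = 1`), `a * b = |G|`, `b` odd, `r ^ a ≡ 1 (mod b)` and
`gcd(a(r-1), b) = 1`. -/
theorem cgroup_isomorphic_gabr {G : Type*} [Group G] [Finite G]
    (hC : ∀ (p : ℕ), p.Prime → ∀ P : Sylow p G, IsCyclic ↥P) :
    ∃ (a b : ℕ) (r : ℤ) (ha : 0 < a) (hb : 0 < b)
      (h0 : 0 ≤ r) (h1 : r < (b : ℤ)) (h01 : b = 1 → r = 0)
      (hab : a * b = Nat.card G) (hodd : Odd b)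
      (hr : r ^ a ≡ 1 [ZMOD (b : ℤ)]) (hgcd : Int.gcd ((a : ℤ) * (r - 1)) b = 1),
      Nonempty (G ≃* Gabr a b r ha.ne' hr) := by
  haveI : IsZGroup G := ⟨hC⟩
  haveI hBnorm : (_root_.commutator G).Normal := Subgroup.commutator_normal ⊤ ⊤
  obtain ⟨HH, hcompl⟩ := Subgroup.exists_right_complement'_of_coprime (ZG.coprime G)
  haveI hcycB : IsCyclic ↥(_root_.commutator G) := ZG.isCyclic_commutator G
  -- HH is cyclic
  have hinj : Function.Injective
      ((QuotientGroup.mk' (_root_.commutator G)).comp HH.subtype) := by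
    rw [← MonoidHom.ker_eq_bot_iff, eq_bot_iff]
    intro h hh
    rw [MonoidHom.mem_ker] at hh
    have h1 : (h : G) ∈ _root_.commutator G := (QuotientGroup.eq_one_iff _).mp hh
    have h2 : (h : G) ∈ _root_.commutator G ⊓ HH := ⟨h1, h.2⟩
    rw [hcompl.disjoint.eq_bot] at h2
    exact Subgroup.mem_bot.mpr (Subtype.ext (Subgroup.mem_bot.mp h2))
  haveI hQc : IsCyclic (G ⧸ _root_.commutator G) := ZG.isCyclic_quot G
  haveI : IsCyclic
      ↥((QuotientGroup.mk' (_root_.commutator G)).comp HH.subtype).range :=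
    Subgroup.isCyclic _
  haveI hcycH : IsCyclic ↥HH :=
    isCyclic_of_surjective (MonoidHom.ofInjective hinj).symm (MulEquiv.surjective _)
  set b := Nat.card ↥(_root_.commutator G) with hbdef
  set a := Nat.card ↥HH with hadef
  haveI : NeZero b := ⟨Nat.card_pos.ne'⟩
  haveI : NeZero a := ⟨Nat.card_pos.ne'⟩
  set eB : Multiplicative (ZMod b) ≃* ↥(_root_.commutator G) :=
    zmodCyclicMulEquiv hcycB with heB
  set eH : Multiplicative (ZMod a) ≃* ↥HH := zmodCyclicMulEquiv hcycH with heH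
  set φ : ↥HH →* MulAut ↥(_root_.commutator G) :=
    (MulAut.conjNormal : G →* MulAut ↥(_root_.commutator G)).comp HH.subtype with hφ
  set Ψ : Multiplicative (ZMod a) →* MulAut (Multiplicative (ZMod b)) :=
    ((MulAut.congr eB.symm).toMonoidHom.comp φ).comp eH.toMonoidHom with hΨ
  set X := Ψ (Multiplicative.ofAdd 1) with hX
  set Y := AddEquiv.toMultiplicative.symm X with hY
  set u : (ZMod b)ˣ := Additive.toMul (ZMod.AddAutEquivUnits b Y) with hu
  have hYu : AddAut.mulLeft u = Y := by
    rw [hu, ← ZMod.AddAutEquivUnits_symm_apply]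
    exact (ZMod.AddAutEquivUnits b).symm_apply_apply Y
  have hXY : AddEquiv.toMultiplicative Y = X := Equiv.apply_symm_apply _ _
  have hXapp : ∀ z : ZMod b,
      X (Multiplicative.ofAdd z) = Multiplicative.ofAdd ((u : ZMod b) * z) := by
    intro z
    rw [← hXY]
    show Multiplicative.ofAdd (Y z) = _
    rw [← hYu]
    rfl
  have hXpow : ∀ (k : ℕ) (z : ZMod b), (X ^ k) (Multiplicative.ofAdd z)
      = Multiplicative.ofAdd ((u : ZMod b) ^ k * z) := by
    intro k
    induction k with
    | zero => intro z; simp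
    | succ k ihk =>
      intro z
      rw [pow_succ', MulAut.mul_apply, ihk, hXapp]
      congr 1
      ring
  have hXa : X ^ a = 1 := by
    rw [hX, ← map_pow]
    have h1 : (Multiplicative.ofAdd (1 : ZMod a)) ^ a = 1 := by
      rw [← ofAdd_nsmul]
      have h2 : (a : ℕ) • (1 : ZMod a) = 0 := by
        rw [nsmul_eq_mul, mul_one, ZMod.natCast_self]
      rw [h2]
      rfl
    rw [h1, map_one]
  have hupow : (u : ZMod b) ^ a = 1 := by
    have h1 := hXpow a 1
    rw [hXa] at h1
    have h2 : (1 : ZMod b) = (u : ZMod b) ^ a * 1 := Multiplicative.ofAdd.injective h1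
    rw [mul_one] at h2
    exact h2.symm
  set r : ℤ := (((u : ZMod b).val : ℤ)) with hrdef
  have hrcast : ((r : ℤ) : ZMod b) = (u : ZMod b) := by
    rw [hrdef]
    push_cast
    rw [ZMod.natCast_val, ZMod.cast_id]
  have hr : r ^ a ≡ 1 [ZMOD (b : ℤ)] := by
    rw [← ZMod.intCast_eq_intCast_iff]
    push_cast
    rw [hrcast, hupow]
  have ha0 : 0 < a := Nat.card_pos
  have hb0 : 0 < b := Nat.card_pos
  have hGU : GabrUnit a b r ha0.ne' hr = u := by
    apply Units.ext
    rw [GabrUnit, IsUnit.unit_spec]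
    exact hrcast
  have hGact1 : GabrAct a b r ha0.ne' hr (Multiplicative.ofAdd 1) = X := by
    have h1 : GabrAct a b r ha0.ne' hr (Multiplicative.ofAdd 1)
        = addAutToMulAut (AddAut.mulLeft (GabrUnit a b r ha0.ne' hr)) := by
      have h2 : (Multiplicative.ofAdd (1 : ZMod a))
          = Multiplicative.ofAdd (((1 : ℤ) : ZMod a)) := by push_cast; rfl
      have key : ∀ (f : ZMod a →+ Additive (MulAut (Multiplicative (ZMod b))))
          (m : ZMod a),
          (AddMonoidHom.toMultiplicativeLeft f) (Multiplicative.ofAdd m)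
            = Additive.toMul (f m) := fun f m => rfl
      unfold GabrAct
      rw [h2, key, ZMod.lift_coe, zmultiplesHom_apply, one_zsmul]
      rfl
    rw [h1, hGU, hYu]
    show AddEquiv.toMultiplicative Y = X
    exact hXY
  have hΨeq : Ψ = GabrAct a b r ha0.ne' hr := ZG.hom_ext_zmod (by rw [hGact1, ← hX])
  have hcompat : ∀ (h : ↥HH) (n : ↥(_root_.commutator G)),
      eB.symm (φ h n) = GabrAct a b r ha0.ne' hr (eH.symm h) (eB.symm n) := by
    intro h n
    have h7 : GabrAct a b r ha0.ne' hr (eH.symm h) = Ψ (eH.symm h) := by rw [hΨeq]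
    rw [h7]
    show eB.symm (φ h n) = (MulAut.congr eB.symm) (φ (eH (eH.symm h))) (eB.symm n)
    rw [MulEquiv.apply_symm_apply]
    show eB.symm (φ h n) = eB.symm ((φ h) (eB.symm.symm (eB.symm n)))
    rw [MulEquiv.symm_symm, MulEquiv.apply_symm_apply]
  have iso : G ≃* Gabr a b r ha0.ne' hr :=
    (ZG.complEquiv hcompl).symm.trans
      (ZG.sdCongr φ (GabrAct a b r ha0.ne' hr) eB.symm eH.symm hcompat)
  have h0 : 0 ≤ r := Int.natCast_nonneg _
  have h1r : r < (b : ℤ) := Int.ofNat_lt.mpr ((u : ZMod b).val_lt)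
  have h01 : b = 1 → r = 0 := by
    intro hb1
    have hlt := (u : ZMod b).val_lt
    rw [hrdef]
    have hv0 : (u : ZMod b).val = 0 := by omega
    rw [hv0]
    rfl
  have hab : a * b = Nat.card G := by
    rw [hadef, hbdef, mul_comm]
    exact hcompl.card_mul
  have hindex : (_root_.commutator G).index = a := hcompl.symm.index_eq_card
  have hca : IsCoprime (a : ℤ) (b : ℤ) := by
    rw [Nat.isCoprime_iff_coprime]
    have h1 := ZG.coprime G
    rw [hindex] at h1
    exact h1.symm
  -- IsUnit (u - 1) via surjectivity of tau
  set x : G := ((eH (Multiplicative.ofAdd 1) : ↥HH) : G) with hxdef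
  have hxsup : Subgroup.zpowers x ⊔ _root_.commutator G = ⊤ := by
    rw [eq_top_iff, ← hcompl.sup_eq_top]
    apply sup_le
    · exact le_sup_right
    · intro g hg
      apply Subgroup.mem_sup_left
      have hgen := ZG.gen_pow eH ⟨g, hg⟩
      have hco : g = x ^ ((Multiplicative.toAdd (eH.symm ⟨g, hg⟩)).val) := by
        have h5 := congrArg Subtype.val hgen
        rw [SubmonoidClass.coe_pow] at h5
        exact h5
      rw [hco]
      exact pow_mem (mem_zpowers x) _
  have hIsUnit : IsUnit ((u : ZMod b) - 1) := by
    obtain ⟨w, hwB, hw⟩ := ZG.tau_surj G x hxsup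
      ((eB (Multiplicative.ofAdd 1) : ↥(_root_.commutator G)) : G)
      (eB (Multiplicative.ofAdd 1)).2
    set z := Multiplicative.toAdd (eB.symm ⟨w, hwB⟩) with hz
    have h1 : (⟨ZG.tau x w, ZG.tau_mem x hwB⟩ : ↥(_root_.commutator G))
        = ⟨w, hwB⟩⁻¹ * φ (eH (Multiplicative.ofAdd 1)) ⟨w, hwB⟩ := by
      apply Subtype.ext
      show ZG.tau x w = w⁻¹ * ((MulAut.conjNormal x) ⟨w, hwB⟩ : G)
      rw [MulAut.conjNormal_apply]
      rfl
    have h2 : eB.symm (⟨ZG.tau x w, ZG.tau_mem x hwB⟩ : ↥(_root_.commutator G))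
        = Multiplicative.ofAdd (((u : ZMod b) - 1) * z) := by
      rw [h1, map_mul, map_inv]
      have h3 : eB.symm (φ (eH (Multiplicative.ofAdd 1)) ⟨w, hwB⟩)
          = X (eB.symm ⟨w, hwB⟩) := by
        rw [hX, hΨ]
        show eB.symm _ = (MulAut.congr eB.symm) (φ (eH (Multiplicative.ofAdd 1))) _
        show eB.symm _ = eB.symm ((φ (eH (Multiplicative.ofAdd 1)))
          (eB.symm.symm (eB.symm ⟨w, hwB⟩)))
        rw [MulEquiv.symm_symm, MulEquiv.apply_symm_apply]
      rw [h3]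
      have h6 : eB.symm ⟨w, hwB⟩ = Multiplicative.ofAdd z := rfl
      rw [h6, hXapp]
      show (Multiplicative.ofAdd z)⁻¹ * Multiplicative.ofAdd ((u : ZMod b) * z) = _
      rw [← ofAdd_neg, ← ofAdd_add]
      congr 1
      ring
    have h4 : ((u : ZMod b) - 1) * z = 1 := by
      have h5 : eB.symm (⟨ZG.tau x w, ZG.tau_mem x hwB⟩ : ↥(_root_.commutator G))
          = Multiplicative.ofAdd (1 : ZMod b) := by
        rw [show (⟨ZG.tau x w, ZG.tau_mem x hwB⟩ : ↥(_root_.commutator G))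
          = eB (Multiplicative.ofAdd 1) from Subtype.ext hw]
        rw [MulEquiv.symm_apply_apply]
      rw [h5] at h2
      exact Multiplicative.ofAdd.injective h2.symm
    exact IsUnit.of_mul_eq_one z h4
  have hcr : IsCoprime (r - 1 : ℤ) (b : ℤ) := by
    obtain ⟨t, ht⟩ := hIsUnit.exists_right_inv
    have hcast : (((r - 1) * (t.val : ℤ) - 1 : ℤ) : ZMod b) = 0 := by
      push_cast
      rw [hrcast, ZMod.natCast_val, ZMod.cast_id, ht]
      ring
    rw [ZMod.intCast_zmod_eq_zero_iff_dvd] at hcast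
    obtain ⟨c, hc⟩ := hcast
    exact ⟨(t.val : ℤ), -c, by linarith⟩
  have hgcd : Int.gcd ((a : ℤ) * (r - 1)) b = 1 :=
    Int.isCoprime_iff_gcd_eq_one.mp (IsCoprime.mul_left hca hcr)
  have hodd : Odd b := by
    rw [← Nat.not_even_iff_odd]
    intro heven
    have h2b : (2 : ℕ) ∣ b := heven.two_dvd
    set π := ZMod.castHom h2b (ZMod 2) with hπ
    have hu1 : IsUnit (π (u : ZMod b)) := (Units.isUnit u).map π
    have hu2 : IsUnit (π ((u : ZMod b) - 1)) := hIsUnit.map π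
    have e1 : π (u : ZMod b) = 1 := by
      revert hu1
      generalize π (u : ZMod b) = y
      revert y
      decide
    rw [map_sub, e1, map_one, sub_self] at hu2
    revert hu2
    decide
  exact ⟨a, b, r, ha0, hb0, h0, h1r, h01, hab, hodd, hr, hgcd, ⟨iso⟩⟩
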